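/- Let W be an algebraic curvature tensor on a real inner product space (V, g) (i.e., W satisfies the symmetries of a Riemann curvature tensor including the first Bianchi identity) and suppose W is trace-free (its Ricci contraction vanishes). If g(W(X,Y)X, Y) = 0 for all X, Y ∈ V ⊗ ℂ spanning a 2-dimensional isotropic subspace (with respect to the complex-bilinear extensions), then W = 0, provided dim V ≥ 4. -/

import Mathlib

open scoped TensorProduct InnerProductSpace

set_option maxHeartbeats 1000000 in
theorem stmt_11 (V : Type*) [NormedAddCommGroup V] [InnerProductSpace ℝ V]
    [FiniteDimensional ℝ V] (hd : 4 ≤ Module.finrank ℝ V)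
    (b : OrthonormalBasis (Fin (Module.finrank ℝ V)) ℝ V)
    (W : V →ₗ[ℝ] V →ₗ[ℝ] V →ₗ[ℝ] V →ₗ[ℝ] ℝ)
    (hanti : ∀ X Y Z T : V, W X Y Z T = -W Y X Z T)
    (hpair : ∀ X Y Z T : V, W X Y Z T = W Z T X Y)
    (hbianchi : ∀ X Y Z T : V, W X Y Z T + W Y Z X T + W Z X Y T = 0)
    (htracefree : ∀ X Y : V, ∑ i, W (b i) X Y (b i) = 0)
    (WC : (ℂ ⊗[ℝ] V) →ₗ[ℂ] (ℂ ⊗[ℝ] V) →ₗ[ℂ] (ℂ ⊗[ℝ] V) →ₗ[ℂ] (ℂ ⊗[ℝ] V) →ₗ[ℂ] ℂ)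
    (hWC : ∀ x y z t : V,
      WC ((1 : ℂ) ⊗ₜ x) ((1 : ℂ) ⊗ₜ y) ((1 : ℂ) ⊗ₜ z) ((1 : ℂ) ⊗ₜ t) = (W x y z t : ℂ))
    (gC : LinearMap.BilinForm ℂ (ℂ ⊗[ℝ] V))
    (hgC : gC = LinearMap.BilinForm.baseChange ℂ
      (innerₗ V : LinearMap.BilinForm ℝ V))
    (hiso : ∀ X Y : ℂ ⊗[ℝ] V, LinearIndependent ℂ ![X, Y] →
      gC X X = 0 → gC X Y = 0 → gC Y Y = 0 → WC X Y X Y = 0) :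
    W = 0 := by
  -- basic symmetry: antisymmetry in the last two slots
  have hlast : ∀ X Y Z T : V, W X Y Z T = -W X Y T Z := by
    intro X Y Z T
    rw [hpair X Y Z T, hanti Z T X Y, hpair T Z X Y]
  have hinner : ∀ i j, ⟪b i, b j⟫_ℝ = if i = j then 1 else 0 := by
    have := b.orthonormal
    rw [orthonormal_iff_ite] at this
    exact_mod_cast this
  have master : ∀ (i j k l : Fin (Module.finrank ℝ V)) (u v : ℂ),
      i ≠ j → i ≠ k → i ≠ l → j ≠ k → j ≠ l → k ≠ l →
      u * u = -1 → v * v = -1 →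
      WC ((1:ℂ) ⊗ₜ b i + u ⊗ₜ b j) ((1:ℂ) ⊗ₜ b k + v ⊗ₜ b l)
        ((1:ℂ) ⊗ₜ b i + u ⊗ₜ b j) ((1:ℂ) ⊗ₜ b k + v ⊗ₜ b l) = 0 := by
    intro i j k l u v hij hik hil hjk hjl hkl hu hv
    apply hiso
    · rw [LinearIndependent.pair_iff]
      intro s t hst
      have hB := congrArg ((b.toBasis.baseChange ℂ).repr) hst
      constructor
      · have := congrArg (fun f => f i) (congrArg DFunLike.coe hB)
        simpa [Module.Basis.baseChange_repr_tmul, hij, hij.symm, hik, hik.symm, hil, hil.symm,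
          Finsupp.single_apply] using this
      · have := congrArg (fun f => f k) (congrArg DFunLike.coe hB)
        simpa [Module.Basis.baseChange_repr_tmul, hik, hik.symm, hjk, hjk.symm, hkl, hkl.symm,
          Finsupp.single_apply] using this
    · simp [hgC, hinner, hij, hij.symm, hu]
    · simp [hgC, hinner, hik, hil, hjk, hjl]
    · simp [hgC, hinner, hkl, hkl.symm, hv]
  have hsm : ∀ (u : ℂ) (x : V), u ⊗ₜ[ℝ] x = u • ((1:ℂ) ⊗ₜ[ℝ] x) := by
    intro u x
    rw [TensorProduct.smul_tmul']
    simp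
  -- the four families of real identities coming from isotropic planes
  have keys : ∀ (i j k l : Fin (Module.finrank ℝ V)),
      i ≠ j → i ≠ k → i ≠ l → j ≠ k → j ≠ l → k ≠ l →
      (W (b i) (b k) (b i) (b k) + W (b j) (b l) (b j) (b l)
        = W (b i) (b l) (b i) (b l) + W (b j) (b k) (b j) (b k)) ∧
      (W (b i) (b k) (b j) (b l) + W (b i) (b l) (b j) (b k) = 0) ∧
      (W (b i) (b k) (b i) (b l) = W (b j) (b k) (b j) (b l)) ∧
      (W (b i) (b k) (b j) (b k) = W (b i) (b l) (b j) (b l)) := by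
    intro i j k l hij hik hil hjk hjl hkl
    have h1 := master i j k l Complex.I Complex.I hij hik hil hjk hjl hkl
      (by simp) (by simp)
    have h2 := master i j k l Complex.I (-Complex.I) hij hik hil hjk hjl hkl
      (by simp) (by rw [neg_mul_neg, Complex.I_mul_I])
    rw [hsm Complex.I (b j), hsm Complex.I (b l)] at h1
    rw [hsm Complex.I (b j), hsm (-Complex.I) (b l)] at h2
    simp only [map_add, map_smul, LinearMap.add_apply, LinearMap.smul_apply, hWC,
      smul_eq_mul] at h1 h2
    have hre1 := congrArg Complex.re h1
    have him1 := congrArg Complex.im h1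
    have hre2 := congrArg Complex.re h2
    have him2 := congrArg Complex.im h2
    simp [Complex.add_re, Complex.add_im, Complex.mul_re, Complex.mul_im] at hre1 him1 hre2 him2
    refine ⟨by linarith, ?_, ?_, ?_⟩
    · have p1 := hpair (b j) (b l) (b i) (b k)
      have p2 := hpair (b j) (b k) (b i) (b l)
      linarith
    · have p1 := hpair (b i) (b l) (b i) (b k)
      have p2 := hpair (b j) (b l) (b j) (b k)
      linarith
    · have p1 := hpair (b j) (b k) (b i) (b k)
      have p2 := hpair (b j) (b l) (b i) (b l)
      linarith
  -- existence of a fresh index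
  have hex : ∀ x y z : Fin (Module.finrank ℝ V), ∃ w, w ≠ x ∧ w ≠ y ∧ w ≠ z := by
    intro x y z
    have : ∃ w, w ∉ ({x, y, z} : Finset (Fin (Module.finrank ℝ V))) := by
      by_contra h
      push_neg at h
      have hsub : (Finset.univ : Finset (Fin (Module.finrank ℝ V))) ⊆ {x, y, z} := fun w _ => h w
      have hc := Finset.card_le_card hsub
      have h3 := Finset.card_insert_le x ({y, z} : Finset (Fin (Module.finrank ℝ V)))
      have h2 := Finset.card_insert_le y ({z} : Finset (Fin (Module.finrank ℝ V)))
      simp [Finset.card_univ] at hc h2 h3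
      omega
    obtain ⟨w, hw⟩ := this
    simp only [Finset.mem_insert, Finset.mem_singleton, not_or] at hw
    exact ⟨w, hw.1, hw.2.1, hw.2.2⟩
  have hNcast : (2 : ℝ) ≤ (((Module.finrank ℝ V) - 2 : ℕ) : ℝ) := by
    have : (2 : ℕ) ≤ (Module.finrank ℝ V) - 2 := by omega
    exact_mod_cast this
  -- vanishing of components with four distinct indices
  have h4 : ∀ i j k l : Fin (Module.finrank ℝ V), i ≠ j → i ≠ k → i ≠ l → j ≠ k → j ≠ l → k ≠ l →
      W (b i) (b j) (b k) (b l) = 0 := by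
    intro i j k l hij hik hil hjk hjl hkl
    have c1 := (keys i k j l hik hij hil hjk.symm hkl hjl).2.1
    have c2 := (keys i j k l hij hik hil hjk hjl hkl).2.1
    have hb := hbianchi (b i) (b j) (b k) (b l)
    have p1 := hpair (b j) (b k) (b i) (b l)
    have p2 := hanti (b k) (b i) (b j) (b l)
    have p3 := hlast (b i) (b l) (b k) (b j)
    linarith
  -- vanishing of "Ricci-type" components
  have hric : ∀ p q r : Fin (Module.finrank ℝ V), p ≠ q → p ≠ r → q ≠ r →
      W (b p) (b q) (b p) (b r) = 0 := by
    intro p q r hpq hpr hqr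
    have htr := htracefree (b q) (b r)
    set c := W (b p) (b q) (b p) (b r) with hc
    have hfun : ∀ m : Fin (Module.finrank ℝ V), m ∈ Finset.univ \ ({q, r} : Finset (Fin (Module.finrank ℝ V))) →
        W (b m) (b q) (b r) (b m) = -c := by
      intro m hm
      simp only [Finset.mem_sdiff, Finset.mem_insert, Finset.mem_singleton, not_or] at hm
      obtain ⟨-, hmq, hmr⟩ := hm
      have e1 : W (b m) (b q) (b r) (b m) = -W (b m) (b q) (b m) (b r) :=
        hlast (b m) (b q) (b r) (b m) ▸ rfl
      rw [hlast (b m) (b q) (b r) (b m)]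
      by_cases hmp : m = p
      · rw [hmp]
      · have := (keys m p q r hmp hmq hmr hpq hpr hqr).2.2.1
        rw [this]
    have hzero2 : ∀ m : Fin (Module.finrank ℝ V), m ∉ Finset.univ \ ({q, r} : Finset (Fin (Module.finrank ℝ V))) →
        W (b m) (b q) (b r) (b m) = 0 := by
      intro m hm
      simp only [Finset.mem_sdiff, Finset.mem_univ, true_and, Finset.mem_insert,
        Finset.mem_singleton, not_not] at hm
      rcases hm with rfl | rfl
      · have := hanti (b m) (b m) (b r) (b m); linarith
      · have := hlast (b m) (b q) (b m) (b m); linarith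
    have hsum : ∑ m, W (b m) (b q) (b r) (b m)
        = ∑ m ∈ Finset.univ \ ({q, r} : Finset (Fin (Module.finrank ℝ V))), W (b m) (b q) (b r) (b m) :=
      (Finset.sum_subset (Finset.subset_univ _) (fun x _ hx => hzero2 x hx)).symm
    have hcard : (Finset.univ \ ({q, r} : Finset (Fin (Module.finrank ℝ V)))).card = (Module.finrank ℝ V) - 2 := by
      rw [Finset.card_sdiff_of_subset (Finset.subset_univ _), Finset.card_pair hqr,
        Finset.card_univ, Fintype.card_fin]
    have : (0 : ℝ) = (((Module.finrank ℝ V) - 2 : ℕ) : ℝ) * (-c) := by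
      rw [← htr, hsum, Finset.sum_congr rfl hfun, Finset.sum_const, hcard, nsmul_eq_mul]
    have hne : (((Module.finrank ℝ V) - 2 : ℕ) : ℝ) ≠ 0 := by linarith
    have := this.symm
    rcases mul_eq_zero.mp (by linarith : (((Module.finrank ℝ V) - 2 : ℕ) : ℝ) * (-c) = 0) with h | h
    · exact absurd h hne
    · linarith
  -- vanishing of sectional-type components
  have hKsym : ∀ p q : Fin (Module.finrank ℝ V), W (b p) (b q) (b p) (b q) = W (b q) (b p) (b q) (b p) := by
    intro p q
    rw [hanti (b p) (b q) (b p) (b q), hlast (b q) (b p) (b p) (b q)]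
    ring_nf
  have htrK : ∀ m : Fin (Module.finrank ℝ V), ∑ q', W (b q') (b m) (b q') (b m) = 0 := by
    intro m
    have htr := htracefree (b m) (b m)
    have he : ∑ q', W (b q') (b m) (b m) (b q')
        = ∑ q', -W (b q') (b m) (b q') (b m) :=
      Finset.sum_congr rfl (fun x _ => hlast (b x) (b m) (b m) (b x))
    rw [he, Finset.sum_neg_distrib] at htr
    linarith
  -- step 1 : K q m = K q p for q ∉ {m, p}
  have hK1 : ∀ q m p : Fin (Module.finrank ℝ V), q ≠ m → q ≠ p → m ≠ p →
      W (b q) (b m) (b q) (b m) = W (b q) (b p) (b q) (b p) := by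
    intro q m p hqm hqp hmp
    set c := W (b q) (b m) (b q) (b m) - W (b q) (b p) (b q) (b p) with hc
    have hfun : ∀ x : Fin (Module.finrank ℝ V), x ∈ Finset.univ \ ({m, p} : Finset (Fin (Module.finrank ℝ V))) →
        W (b x) (b m) (b x) (b m) - W (b x) (b p) (b x) (b p) = c := by
      intro x hx
      simp only [Finset.mem_sdiff, Finset.mem_insert, Finset.mem_singleton, not_or] at hx
      obtain ⟨-, hxm, hxp⟩ := hx
      by_cases hxq : x = q
      · rw [hxq]
      · have := (keys x q m p hxq hxm hxp hqm hqp hmp).1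
        rw [hc]; linarith
    have hsplit : ∀ z : Fin (Module.finrank ℝ V), ∑ x ∈ Finset.univ \ ({m, p} : Finset (Fin (Module.finrank ℝ V))),
        W (b x) (b z) (b x) (b z)
        = ∑ x, W (b x) (b z) (b x) (b z)
          - (W (b m) (b z) (b m) (b z) + W (b p) (b z) (b p) (b z)) := by
      intro z
      have h1 : ∑ x ∈ Finset.univ \ ({m, p} : Finset (Fin (Module.finrank ℝ V))), W (b x) (b z) (b x) (b z)
          + ∑ x ∈ ({m, p} : Finset (Fin (Module.finrank ℝ V))), W (b x) (b z) (b x) (b z)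
          = ∑ x, W (b x) (b z) (b x) (b z) :=
        Finset.sum_sdiff (Finset.subset_univ _)
      rw [Finset.sum_pair hmp] at h1
      linarith
    have hcard : (Finset.univ \ ({m, p} : Finset (Fin (Module.finrank ℝ V)))).card = (Module.finrank ℝ V) - 2 := by
      rw [Finset.card_sdiff_of_subset (Finset.subset_univ _), Finset.card_pair hmp,
        Finset.card_univ, Fintype.card_fin]
    have hsumeq : (((Module.finrank ℝ V) - 2 : ℕ) : ℝ) * c = 0 := by
      have e1 : ∑ x ∈ Finset.univ \ ({m, p} : Finset (Fin (Module.finrank ℝ V))),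
          (W (b x) (b m) (b x) (b m) - W (b x) (b p) (b x) (b p))
          = (((Module.finrank ℝ V) - 2 : ℕ) : ℝ) * c := by
        rw [Finset.sum_congr rfl hfun, Finset.sum_const, hcard, nsmul_eq_mul]
      rw [Finset.sum_sub_distrib, hsplit m, hsplit p, htrK m, htrK p] at e1
      have hs1 := hKsym p m
      have hs2 := hanti (b m) (b m) (b m) (b m)
      have hs3 := hanti (b p) (b p) (b p) (b p)
      rw [← e1]
      linarith
    have hne : (((Module.finrank ℝ V) - 2 : ℕ) : ℝ) ≠ 0 := by linarith
    rcases mul_eq_zero.mp hsumeq with h | h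
    · exact absurd h hne
    · rw [hc] at h; linarith
  have hK : ∀ p q : Fin (Module.finrank ℝ V), p ≠ q → W (b p) (b q) (b p) (b q) = 0 := by
    intro p q hpq
    set c := W (b p) (b q) (b p) (b q) with hc
    have hfun : ∀ m : Fin (Module.finrank ℝ V), m ∈ Finset.univ \ ({q} : Finset (Fin (Module.finrank ℝ V))) →
        W (b m) (b q) (b m) (b q) = c := by
      intro m hm
      simp only [Finset.mem_sdiff, Finset.mem_singleton] at hm
      obtain ⟨-, hmq⟩ := hm
      by_cases hmp : m = p
      · rw [hmp]
      · calc W (b m) (b q) (b m) (b q) = W (b q) (b m) (b q) (b m) := hKsym m q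
          _ = W (b q) (b p) (b q) (b p) := hK1 q m p (fun h => hmq h.symm) (fun h => hpq h.symm) hmp
          _ = c := (hKsym p q).symm
    have hsum : ∑ m, W (b m) (b q) (b m) (b q)
        = ∑ m ∈ Finset.univ \ ({q} : Finset (Fin (Module.finrank ℝ V))), W (b m) (b q) (b m) (b q) := by
      refine (Finset.sum_subset (Finset.subset_univ _) (fun x _ hx => ?_)).symm
      simp only [Finset.mem_sdiff, Finset.mem_univ, true_and, Finset.mem_singleton,
        not_not] at hx
      subst hx
      have := hanti (b x) (b x) (b x) (b x)
      linarith
    have hcard : (Finset.univ \ ({q} : Finset (Fin (Module.finrank ℝ V)))).card = (Module.finrank ℝ V) - 1 := by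
      rw [Finset.card_sdiff_of_subset (Finset.subset_univ _), Finset.card_singleton,
        Finset.card_univ, Fintype.card_fin]
    have : (0 : ℝ) = (((Module.finrank ℝ V) - 1 : ℕ) : ℝ) * c := by
      rw [← htrK q, hsum, Finset.sum_congr rfl hfun, Finset.sum_const, hcard, nsmul_eq_mul]
    have hge : (3 : ℝ) ≤ (((Module.finrank ℝ V) - 1 : ℕ) : ℝ) := by
      have : (3 : ℕ) ≤ (Module.finrank ℝ V) - 1 := by omega
      exact_mod_cast this
    have hne : (((Module.finrank ℝ V) - 1 : ℕ) : ℝ) ≠ 0 := by linarith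
    rcases mul_eq_zero.mp this.symm with h | h
    · exact absurd h hne
    · exact h
  -- all components vanish
  have hzero : ∀ p q r s : Fin (Module.finrank ℝ V), W (b p) (b q) (b r) (b s) = 0 := by
    intro p q r s
    by_cases hpq : p = q
    · subst hpq; have := hanti (b p) (b p) (b r) (b s); linarith
    by_cases hrs : r = s
    · subst hrs; have := hlast (b p) (b q) (b r) (b r); linarith
    by_cases hpr : p = r
    · subst hpr
      by_cases hqs : q = s
      · subst hqs; exact hK p q hpq
      · exact hric p q s hpq hrs hqs
    by_cases hps : p = s
    · subst hps
      rw [hlast (b p) (b q) (b r) (b p)]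
      by_cases hqr : q = r
      · subst hqr; rw [hK p q hpq]; ring
      · rw [hric p q r hpq (Ne.symm hrs) hqr]; ring
    by_cases hqr : q = r
    · subst hqr
      rw [hanti (b p) (b q) (b q) (b s)]
      rw [hric q p s (Ne.symm hpq) hrs hps]
      ring
    by_cases hqs : q = s
    · subst hqs
      rw [hanti (b p) (b q) (b r) (b q), hlast (b q) (b p) (b r) (b q)]
      rw [hric q p r (Ne.symm hpq) hqr hpr]
      ring
    · exact h4 p q r s hpq hpr hps hqr hqs hrs
  refine b.toBasis.ext fun p => b.toBasis.ext fun q => b.toBasis.ext fun r =>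
    b.toBasis.ext fun s => ?_
  simp only [OrthonormalBasis.coe_toBasis, LinearMap.zero_apply]
  exact hzero p q r s
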